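/- For a non-resonant ω ∈ ℝ^n and a weight φ with A_+^φ ≠ ∅: ω ∈ A_+^φ (i.e. ln(|2πk·ω|^{-1}) = o(φ(|k|))) if and only if for every f ∈ F_+^φ with f_0 = 0, the solution g (with g_0 = 0, g_k = (i2πk·ω)^{-1}f_k) belongs to F_+^φ. -/

import Mathlib

open scoped ENNReal
open Filter

noncomputable section

/-- sup-norm of a lattice vector `k ∈ ℤⁿ`, `|k| = max_i |k_i|`. -/
def knorm {n : ℕ} (k : Fin n → ℤ) : ℝ :=
  ((Finset.univ.sup fun i => (k i).natAbs : ℕ) : ℝ)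

/-- Euclidean pairing `k · ω`. -/
def dot {n : ℕ} (ω : Fin n → ℝ) (k : Fin n → ℤ) : ℝ := ∑ i, (k i : ℝ) * ω i

/-- Weighted sup-norm `‖f‖_r = sup_k |f_k| e^{r φ(|k|)}` (valued in `ℝ≥0∞`). -/
def fnorm {n : ℕ} (φ : ℝ → ℝ) (r : ℝ) (f : (Fin n → ℤ) → ℂ) : ℝ≥0∞ :=
  ⨆ k : Fin n → ℤ, ENNReal.ofReal (‖f k‖ * Real.exp (r * φ (knorm k)))

/-- `γ_τ⁻¹(ω) = sup_{k ≠ 0} |2π k·ω|⁻¹ e^{-τ φ(|k|)}` (valued in `ℝ≥0∞`). -/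
def gammaInv {n : ℕ} (φ : ℝ → ℝ) (τ : ℝ) (ω : Fin n → ℝ) : ℝ≥0∞ :=
  ⨆ k : {k : Fin n → ℤ // k ≠ 0},
    ENNReal.ofReal (|2 * Real.pi * dot ω (k : Fin n → ℤ)|⁻¹ *
      Real.exp (-τ * φ (knorm (k : Fin n → ℤ))))

/-- The normalized solution of the cohomological equation:
`g_0 = 0`, `g_k = (i 2π k·ω)⁻¹ f_k` for `k ≠ 0`. -/
def sol {n : ℕ} (ω : Fin n → ℝ) (f : (Fin n → ℤ) → ℂ) : (Fin n → ℤ) → ℂ :=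
  fun k => if k = 0 then 0 else (Complex.I * (2 * Real.pi * dot ω k))⁻¹ * f k

/-- A weight: continuous, vanishing at `0`, non-decreasing and non-negative on `[0,∞)`,
with `ln(1+t) = O(φ(t))`. -/
def IsWeight (φ : ℝ → ℝ) : Prop :=
  Continuous φ ∧ φ 0 = 0 ∧ MonotoneOn φ (Set.Ici 0) ∧ (∀ t, 0 ≤ t → 0 ≤ φ t) ∧
    ∃ C > (0 : ℝ), ∃ T : ℝ, ∀ t ≥ T, Real.log (1 + t) ≤ C * φ t

end

lemma knorm_nonneg {n : ℕ} (k : Fin n → ℤ) : 0 ≤ knorm k := Nat.cast_nonneg _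

lemma abs_sol {n : ℕ} (ω : Fin n → ℝ) (f : (Fin n → ℤ) → ℂ) {k : Fin n → ℤ} (hk : k ≠ 0) :
    ‖sol ω f k‖ = |2 * Real.pi * dot ω k|⁻¹ * ‖f k‖ := by
  have hc : (Complex.I * (2 * Real.pi * dot ω k) : ℂ)
      = Complex.I * ((2 * Real.pi * dot ω k : ℝ) : ℂ) := by push_cast; ring
  simp only [sol, if_neg hk, hc, norm_mul, norm_inv, Complex.norm_I, one_mul,
    Complex.norm_real, Real.norm_eq_abs, abs_mul]

lemma exists_bad {n : ℕ} (φ : ℝ → ℝ) (τ : ℝ) (ω : Fin n → ℝ)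
    (htop : gammaInv φ τ ω = ⊤) (j : ℕ) :
    ∃ k : Fin n → ℤ, k ≠ 0 ∧ (j : ℝ) ≤ knorm k ∧
      1 ≤ |2 * Real.pi * dot ω k|⁻¹ * Real.exp (-τ * φ (knorm k)) := by
  by_contra hcon
  push_neg at hcon
  set T := fun k : Fin n → ℤ => |2 * Real.pi * dot ω k|⁻¹ * Real.exp (-τ * φ (knorm k)) with hT
  have hTnn : ∀ k, 0 ≤ T k := fun k =>
    mul_nonneg (inv_nonneg.2 (abs_nonneg _)) (Real.exp_nonneg _)
  set Kj : Finset (Fin n → ℤ) := Fintype.piFinset fun _ => Finset.Icc (-(j : ℤ)) j with hKj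
  set S := ∑ k ∈ Kj, T k with hS
  have hS0 : 0 ≤ S := Finset.sum_nonneg fun k _ => hTnn k
  have hle : gammaInv φ τ ω ≤ ENNReal.ofReal (1 + S) := by
    rw [gammaInv]
    refine iSup_le fun kk => ?_
    obtain ⟨k, hk⟩ := kk
    refine ENNReal.ofReal_le_ofReal ?_
    show T k ≤ 1 + S
    by_cases hkj : (j : ℝ) ≤ knorm k
    · have h1 : T k < 1 := hcon k hk hkj
      linarith
    · have hmem : k ∈ Kj := by
        rw [hKj, Fintype.mem_piFinset]
        intro i
        have h1 : ((k i).natAbs : ℝ) ≤ knorm k := by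
          rw [knorm]
          exact Nat.cast_le.mpr (Finset.le_sup (f := fun i => (k i).natAbs) (Finset.mem_univ i))
        have h2 : ((k i).natAbs : ℝ) < (j : ℝ) := lt_of_le_of_lt h1 (lt_of_not_ge hkj)
        have h3 : (k i).natAbs < j := by exact_mod_cast h2
        simp only [Finset.mem_Icc]
        omega
      have : T k ≤ S := Finset.single_le_sum (fun k _ => hTnn k) hmem
      linarith
  rw [htop, top_le_iff] at hle
  exact ENNReal.ofReal_ne_top hle

lemma weight_unbounded {φ : ℝ → ℝ} (hφ : IsWeight φ) (L : ℝ) : ∃ N : ℕ, L ≤ φ N := by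
  obtain ⟨-, -, hmono, hnn, C, hC, T, hT⟩ := hφ
  set L' := max L 0 with hL'
  obtain ⟨N, hN⟩ := exists_nat_ge (max T (Real.exp (C * L')))
  refine ⟨N, ?_⟩
  have h1 : Real.log (1 + N) ≤ C * φ N := hT N (le_trans (le_max_left _ _) hN)
  have h2 : Real.exp (C * L') ≤ (N : ℝ) := le_trans (le_max_right _ _) hN
  have h3 : C * L' ≤ Real.log (1 + N) := by
    rw [Real.le_log_iff_exp_le (by positivity)]
    linarith
  have h4 : L' ≤ φ N := le_of_mul_le_mul_left (by linarith) hC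
  exact le_trans (le_max_left _ _) h4

/-- assuming `A_+^φ ≠ ∅`, `ω ∈ A_+^φ` iff the cohomological equation can
be solved in `F_+^φ`. -/
theorem stmt4 {n : ℕ} (φ : ℝ → ℝ) (hφ : IsWeight φ)
    (ω : Fin n → ℝ) (hnr : ∀ k : Fin n → ℤ, k ≠ 0 → dot ω k ≠ 0)
    (hne : ∃ ω' : Fin n → ℝ, ∀ τ : ℝ, 0 < τ → gammaInv φ τ ω' ≠ ⊤) :
    (∀ τ : ℝ, 0 < τ → gammaInv φ τ ω ≠ ⊤) ↔
      (∀ f : (Fin n → ℤ) → ℂ, f 0 = 0 →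
        (∃ r : ℝ, 0 < r ∧ fnorm φ r f ≠ ⊤) →
        (∃ r : ℝ, 0 < r ∧ fnorm φ r (sol ω f) ≠ ⊤)) := by
  classical
  constructor
  · -- forward direction
    rintro h f hf0 ⟨r, hr, hfr⟩
    refine ⟨r / 2, by positivity, ?_⟩
    have key : fnorm φ (r / 2) (sol ω f) ≤ gammaInv φ (r / 2) ω * fnorm φ r f := by
      rw [fnorm]
      refine iSup_le fun k => ?_
      by_cases hk : k = 0
      · simp [hk, sol]
      · rw [abs_sol ω f hk]
        have hsplit : |2 * Real.pi * dot ω k|⁻¹ * ‖f k‖ *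
            Real.exp (r / 2 * φ (knorm k)) =
            (|2 * Real.pi * dot ω k|⁻¹ * Real.exp (-(r / 2) * φ (knorm k))) *
            (‖f k‖ * Real.exp (r * φ (knorm k))) := by
          have harg : -(r / 2) * φ (knorm k) + r * φ (knorm k) = r / 2 * φ (knorm k) := by
            ring
          rw [mul_mul_mul_comm, ← Real.exp_add, harg]
        rw [hsplit, ENNReal.ofReal_mul
          (mul_nonneg (inv_nonneg.2 (abs_nonneg _)) (Real.exp_nonneg _))]
        refine mul_le_mul' ?_ ?_
        · exact le_iSup (fun kk : {k : Fin n → ℤ // k ≠ 0} =>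
            ENNReal.ofReal (|2 * Real.pi * dot ω (kk : Fin n → ℤ)|⁻¹ *
              Real.exp (-(r / 2) * φ (knorm (kk : Fin n → ℤ))))) ⟨k, hk⟩
        · exact le_iSup (fun k => ENNReal.ofReal
            (‖f k‖ * Real.exp (r * φ (knorm k)))) k
    have hfin : gammaInv φ (r / 2) ω * fnorm φ r f ≠ ⊤ :=
      ENNReal.mul_ne_top (h (r / 2) (by positivity)) hfr
    exact fun htop => hfin (top_le_iff.1 (htop ▸ key))
  · -- reverse direction, by contraposition
    intro H
    by_contra hC
    push_neg at hC
    obtain ⟨τ, hτ, htop⟩ := hC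
    have hbad := fun j : ℕ => exists_bad φ τ ω htop j
    set kseq : ℕ → (Fin n → ℤ) := fun j => (hbad j).choose with hkseq
    have hk0 : ∀ j, kseq j ≠ 0 := fun j => (hbad j).choose_spec.1
    have hkn : ∀ j : ℕ, (j : ℝ) ≤ knorm (kseq j) := fun j => (hbad j).choose_spec.2.1
    have hkb : ∀ j : ℕ, 1 ≤ |2 * Real.pi * dot ω (kseq j)|⁻¹ *
        Real.exp (-τ * φ (knorm (kseq j))) := fun j => (hbad j).choose_spec.2.2
    set f : (Fin n → ℤ) → ℂ :=
      fun m => if ∃ j : ℕ, kseq j = m then Complex.I * (2 * Real.pi * dot ω m) else 0 with hf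
    have hfval : ∀ m : Fin n → ℤ, (∃ j : ℕ, kseq j = m) →
        f m = Complex.I * (2 * Real.pi * dot ω m) := by
      intro m hm
      simp only [hf]
      rw [if_pos hm]
    have hfval0 : ∀ m : Fin n → ℤ, ¬ (∃ j : ℕ, kseq j = m) → f m = 0 := by
      intro m hm
      simp only [hf]
      rw [if_neg hm]
    have habsval : ∀ m : Fin n → ℤ, (∃ j : ℕ, kseq j = m) →
        ‖f m‖ = |2 * Real.pi * dot ω m| := by
      intro m hm
      rw [hfval m hm]
      have hc : (Complex.I * (2 * Real.pi * dot ω m) : ℂ)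
          = Complex.I * ((2 * Real.pi * dot ω m : ℝ) : ℂ) := by push_cast; ring
      rw [hc, norm_mul, Complex.norm_I, one_mul, Complex.norm_real, Real.norm_eq_abs]
    have hf0 : f 0 = 0 := by
      by_cases hm : ∃ j : ℕ, kseq j = 0
      · obtain ⟨j, hj⟩ := hm
        exact absurd hj (hk0 j)
      · exact hfval0 0 hm
    have hpos : ∀ k : Fin n → ℤ, k ≠ 0 → 0 < |2 * Real.pi * dot ω k| := fun k hk =>
      abs_pos.2 (mul_ne_zero (mul_ne_zero two_ne_zero Real.pi_ne_zero) (hnr k hk))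
    -- f ∈ F_+^φ at r = τ
    have hffin : fnorm φ τ f ≠ ⊤ := by
      have hle : fnorm φ τ f ≤ 1 := by
        rw [fnorm]
        refine iSup_le fun m => ?_
        by_cases hm : ∃ j : ℕ, kseq j = m
        · rw [habsval m hm, ← ENNReal.ofReal_one]
          refine ENNReal.ofReal_le_ofReal ?_
          obtain ⟨j, rfl⟩ := hm
          have hb := hkb j
          have hp := hpos _ (hk0 j)
          have h1 : |2 * Real.pi * dot ω (kseq j)| ≤ Real.exp (-τ * φ (knorm (kseq j))) := by
            rw [inv_mul_eq_div] at hb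
            exact (one_le_div hp).mp hb
          calc |2 * Real.pi * dot ω (kseq j)| * Real.exp (τ * φ (knorm (kseq j)))
              ≤ Real.exp (-τ * φ (knorm (kseq j))) * Real.exp (τ * φ (knorm (kseq j))) :=
                mul_le_mul_of_nonneg_right h1 (Real.exp_nonneg _)
            _ = 1 := by
                rw [← Real.exp_add, show -τ * φ (knorm (kseq j)) + τ * φ (knorm (kseq j)) = 0
                  by ring, Real.exp_zero]
        · rw [hfval0 m hm, norm_zero, zero_mul, ENNReal.ofReal_zero]
          exact zero_le_one
      exact fun ht => by simp [ht] at hle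
    obtain ⟨r, hrpos, hgr⟩ := H f hf0 ⟨τ, hτ, hffin⟩
    -- |sol ω f (kseq j)| = 1
    have hsol1 : ∀ j : ℕ, ‖sol ω f (kseq j)‖ = 1 := by
      intro j
      have hfk := hfval (kseq j) ⟨j, rfl⟩
      rw [sol]
      simp only [if_neg (hk0 j), hfk]
      rw [inv_mul_cancel₀, norm_one]
      refine mul_ne_zero Complex.I_ne_zero ?_
      have hne0 : ((2 * Real.pi * dot ω (kseq j) : ℝ) : ℂ) ≠ 0 := by
        exact_mod_cast (mul_ne_zero (mul_ne_zero two_ne_zero Real.pi_ne_zero)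
          (hnr _ (hk0 j)))
      have hc : (2 * Real.pi * dot ω (kseq j) : ℂ)
          = ((2 * Real.pi * dot ω (kseq j) : ℝ) : ℂ) := by push_cast; ring
      rw [hc]; exact hne0
    -- derive contradiction
    set M : ℝ := (fnorm φ r (sol ω f)).toReal + 1 with hM
    have hM1 : 1 ≤ M := by
      have := ENNReal.toReal_nonneg (a := fnorm φ r (sol ω f)); linarith
    obtain ⟨N, hN⟩ := weight_unbounded hφ (Real.log M / r)
    have hφN : Real.log M / r ≤ φ (knorm (kseq N)) := by
      refine le_trans hN ?_
      obtain ⟨-, -, hmono, -, -⟩ := hφ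
      exact hmono (Set.mem_Ici.2 (Nat.cast_nonneg N))
        (Set.mem_Ici.2 (knorm_nonneg _)) (hkn N)
    have hMle : M ≤ Real.exp (r * φ (knorm (kseq N))) := by
      have h1 : Real.log M ≤ r * φ (knorm (kseq N)) := by
        rw [div_le_iff₀ hrpos] at hφN; linarith [hφN]
      calc M = Real.exp (Real.log M) := (Real.exp_log (by linarith)).symm
        _ ≤ _ := Real.exp_le_exp.2 h1
    have hup : ENNReal.ofReal M ≤ fnorm φ r (sol ω f) := by
      refine le_trans (ENNReal.ofReal_le_ofReal ?_) (le_iSup (fun k => ENNReal.ofReal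
        (‖sol ω f k‖ * Real.exp (r * φ (knorm k)))) (kseq N))
      rw [hsol1 N, one_mul]
      exact hMle
    rw [ENNReal.ofReal_le_iff_le_toReal hgr] at hup
    linarith
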